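/- Let T = (V, ≻) be a tournament with top cycle C. Then the Banks set of T equals the Banks set of the subtournament of T induced on C. -/

import Mathlib

open scoped Classical

variable {V : Type*}

/-- A tournament: an irreflexive relation such that for distinct `u, v`
exactly one of `r u v` and `r v u` holds. -/
def IsTournament (r : V → V → Prop) : Prop :=
  (∀ v, ¬ r v v) ∧ ∀ u v : V, u ≠ v → (r u v ↔ ¬ r v u)

/-- `D` is a dominant set: it is nonempty and every vertex in `D` dominates
every vertex outside `D`. -/
def IsDominant (r : V → V → Prop) (D : Set V) : Prop :=
  D.Nonempty ∧ ∀ x ∈ D, ∀ y ∉ D, r x y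

/-- `C` is the top cycle: the smallest dominant set. -/
def IsTopCycle (r : V → V → Prop) (C : Set V) : Prop :=
  IsDominant r C ∧ ∀ D : Set V, IsDominant r D → C ⊆ D

/-- `S` is a transitive subset: the restriction of `r` to `S` is transitive. -/
def TransOn (r : V → V → Prop) (S : Set V) : Prop :=
  ∀ a ∈ S, ∀ b ∈ S, ∀ c ∈ S, r a b → r b c → r a c

/-- The Banks set of the subtournament induced on a ground set `W`: the maximum
elements of the transitive subsets of `W` that are maximal (w.r.t. inclusion)
among transitive subsets of `W`. For `W = Set.univ` this is the Banks set of the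
whole tournament. -/
def banksSetIn (r : V → V → Prop) (W : Set V) : Set V :=
  {m | ∃ S : Set V, S ⊆ W ∧ TransOn r S ∧ m ∈ S ∧ (∀ s ∈ S, s ≠ m → r m s) ∧
    ∀ S' : Set V, S' ⊆ W → TransOn r S' → S ⊆ S' → S = S'}

lemma tour_asymm {r : V → V → Prop} (hT : IsTournament r) {u v : V} (h : r u v) : ¬ r v u := by
  by_cases he : u = v
  · subst he; exact absurd h (hT.1 u)
  · exact (hT.2 u v he).mp h

lemma finset_max {r : V → V → Prop} (hT : IsTournament r) :
    ∀ F : Finset V, (∀ a ∈ F, ∀ b ∈ F, ∀ c ∈ F, r a b → r b c → r a c) →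
    F.Nonempty → ∃ m ∈ F, ∀ s ∈ F, s ≠ m → r m s := by
  intro F
  induction F using Finset.induction_on with
  | empty => intro _ h; simp at h
  | @insert a F ha ih =>
    intro htr _
    rcases F.eq_empty_or_nonempty with hF | hF
    · subst hF
      refine ⟨a, by simp, ?_⟩
      intro s hs hne
      simp at hs
      exact absurd hs hne
    · obtain ⟨m, hmF, hmax⟩ := ih
        (fun x hx y hy z hz => htr x (Finset.mem_insert_of_mem hx) y
          (Finset.mem_insert_of_mem hy) z (Finset.mem_insert_of_mem hz)) hF
      have ham : a ≠ m := fun h => ha (h ▸ hmF)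
      by_cases hr : r a m
      · refine ⟨a, Finset.mem_insert_self a F, ?_⟩
        intro s hs hne
        rcases Finset.mem_insert.mp hs with h | h
        · exact absurd h hne
        · by_cases hsm : s = m
          · exact hsm ▸ hr
          · exact htr a (Finset.mem_insert_self a F) m (Finset.mem_insert_of_mem hmF)
              s (Finset.mem_insert_of_mem h) hr (hmax s h hsm)
      · have hma : r m a := by
          by_contra h2
          exact hr ((hT.2 a m ham).mpr h2)
        refine ⟨m, Finset.mem_insert_of_mem hmF, ?_⟩
        intro s hs hne
        rcases Finset.mem_insert.mp hs with h | h
        · exact h ▸ hma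
        · exact hmax s h hne

lemma transOn_max [Fintype V] {r : V → V → Prop} (hT : IsTournament r) {S : Set V}
    (hS : TransOn r S) (hne : S.Nonempty) : ∃ m ∈ S, ∀ s ∈ S, s ≠ m → r m s := by
  have hfin := Set.toFinite S
  have := finset_max hT hfin.toFinset
    (fun a ha b hb c hc => hS a (hfin.mem_toFinset.mp ha) b (hfin.mem_toFinset.mp hb)
      c (hfin.mem_toFinset.mp hc))
    (let ⟨x, hx⟩ := hne; ⟨x, hfin.mem_toFinset.mpr hx⟩)
  obtain ⟨m, hm, hmax⟩ := this
  exact ⟨m, hfin.mem_toFinset.mp hm, fun s hs => hmax s (hfin.mem_toFinset.mpr hs)⟩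

lemma exists_maximal_ext [Fintype V] (r : V → V → Prop) {S : Set V} (hS : TransOn r S) :
    ∃ T : Set V, TransOn r T ∧ S ⊆ T ∧ ∀ S' : Set V, TransOn r S' → T ⊆ S' → T = S' := by
  obtain ⟨T, hT, hmax⟩ := Set.Finite.exists_maximalFor (id : Set V → Set V)
    {T | TransOn r T ∧ S ⊆ T} (Set.toFinite _) ⟨S, hS, subset_rfl⟩
  exact ⟨T, hT.1, hT.2, fun S' hS' hsub => Set.Subset.antisymm hsub (hmax ⟨hS', hT.2.trans hsub⟩ hsub)⟩

lemma union_trans {r : V → V → Prop} (hT : IsTournament r) {C : Set V} (hC : IsTopCycle r C)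
    {A B : Set V} (hA : TransOn r A) (hB : TransOn r B) (hBC : B ⊆ C) (hAC : A ∩ C ⊆ B) :
    TransOn r (A ∪ B) := by
  have dom : ∀ b ∈ B, ∀ a ∈ A, a ∉ C → r b a := fun b hb a _ hac => hC.1.2 b (hBC hb) a hac
  have cls : ∀ w ∈ A ∪ B, w ∈ B ∨ (w ∈ A ∧ w ∉ C) := by
    intro w hw
    by_cases hwC : w ∈ C
    · rcases hw with h | h
      · exact Or.inl (hAC ⟨h, hwC⟩)
      · exact Or.inl h
    · rcases hw with h | h
      · exact Or.inr ⟨h, hwC⟩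
      · exact absurd (hBC h) hwC
  intro x hx y hy z hz hxy hyz
  rcases cls x hx with hxB | hxA <;> rcases cls y hy with hyB | hyA <;>
    rcases cls z hz with hzB | hzA
  · exact hB x hxB y hyB z hzB hxy hyz
  · exact dom x hxB z hzA.1 hzA.2
  · exact absurd (dom z hzB y hyA.1 hyA.2) (tour_asymm hT hyz)
  · exact dom x hxB z hzA.1 hzA.2
  · exact absurd (dom y hyB x hxA.1 hxA.2) (tour_asymm hT hxy)
  · exact absurd (dom y hyB x hxA.1 hxA.2) (tour_asymm hT hxy)
  · exact absurd (dom z hzB y hyA.1 hyA.2) (tour_asymm hT hyz)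
  · exact hA x hxA.1 y hyA.1 z hzA.1 hxy hyz

lemma max_mem_topCycle {r : V → V → Prop} (hT : IsTournament r) {C : Set V}
    (hC : IsTopCycle r C) {S : Set V} (hS : TransOn r S) {m : V} (hm : m ∈ S)
    (hmax : ∀ s ∈ S, s ≠ m → r m s)
    (hSmax : ∀ S' : Set V, TransOn r S' → S ⊆ S' → S = S') : m ∈ C := by
  by_contra hmC
  by_cases hSC : (S ∩ C).Nonempty
  · obtain ⟨s, hsS, hsC⟩ := hSC
    have hsm : s ≠ m := fun h => hmC (h ▸ hsC)
    exact tour_asymm hT (hmax s hsS hsm) (hC.1.2 s hsC m hmC)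
  · obtain ⟨c, hc⟩ := hC.1.1
    have hcS : c ∉ S := fun h => hSC ⟨c, h, hc⟩
    have hBt : TransOn r ({c} : Set V) := by
      intro a ha b hb _ _ hab _
      simp only [Set.mem_singleton_iff] at ha hb
      subst ha; subst hb
      exact absurd hab (hT.1 _)
    have htrans : TransOn r (S ∪ {c}) :=
      union_trans hT hC hS hBt (by simp [hc]) (fun x hx => absurd ⟨x, hx.1, hx.2⟩ hSC)
    have heq : S = S ∪ {c} := hSmax _ htrans Set.subset_union_left
    exact hcS (heq ▸ Set.mem_union_right S rfl)

/-- the Banks set of a tournament equals the Banks set of the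
subtournament induced on its top cycle. -/
theorem banks_eq_banks_of_topCycle [Fintype V] (r : V → V → Prop)
    (hT : IsTournament r) (C : Set V) (hC : IsTopCycle r C) :
    banksSetIn r Set.univ = banksSetIn r C := by
  ext m
  simp only [banksSetIn, Set.mem_setOf_eq]
  constructor
  · rintro ⟨S, -, hStr, hmS, hmmax, hSmax⟩
    have hSmax' : ∀ S' : Set V, TransOn r S' → S ⊆ S' → S = S' :=
      fun S' h hsub => hSmax S' (Set.subset_univ _) h hsub
    have hmC : m ∈ C := max_mem_topCycle hT hC hStr hmS hmmax hSmax'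
    refine ⟨S ∩ C, Set.inter_subset_right, ?_, ⟨hmS, hmC⟩, ?_, ?_⟩
    · intro a ha b hb c hc hab hbc; exact hStr a ha.1 b hb.1 c hc.1 hab hbc
    · intro s hs hne; exact hmmax s hs.1 hne
    · intro S' hS'C hS'tr hsub
      have hun : TransOn r (S ∪ S') :=
        union_trans hT hC hStr hS'tr hS'C (fun x hx => hsub hx)
      have heq : S = S ∪ S' := hSmax' _ hun Set.subset_union_left
      refine Set.Subset.antisymm hsub (fun x hx => ?_)
      have hxS : x ∈ S := heq ▸ Set.mem_union_right S hx
      exact ⟨hxS, hS'C hx⟩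
  · rintro ⟨S, hSC, hStr, hmS, hmmax, hSmax⟩
    obtain ⟨T, hTtr, hST, hTmax⟩ := exists_maximal_ext r hStr
    have hTC : T ∩ C = S := by
      refine (hSmax (T ∩ C) Set.inter_subset_right ?_ ?_).symm
      · intro a ha b hb c hc hab hbc; exact hTtr a ha.1 b hb.1 c hc.1 hab hbc
      · intro x hx; exact ⟨hST hx, hSC hx⟩
    obtain ⟨m', hm'T, hm'max⟩ := transOn_max hT hTtr ⟨m, hST hmS⟩
    have hm'C : m' ∈ C := max_mem_topCycle hT hC hTtr hm'T hm'max hTmax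
    have hm'S : m' ∈ S := hTC ▸ (⟨hm'T, hm'C⟩ : m' ∈ T ∩ C)
    have hmm : m' = m := by
      by_contra hne
      exact tour_asymm hT (hmmax m' hm'S hne) (hm'max m (hST hmS) (Ne.symm hne))
    subst hmm
    exact ⟨T, Set.subset_univ _, hTtr, hm'T, hm'max, fun S' _ h hsub => hTmax S' h hsub⟩
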